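/- The function x ↦ (1 − Φ(x))/φ(x) (the reciprocal of the Mills ratio hazard function) is strictly decreasing on [0, ∞). -/

import Mathlib

open Real MeasureTheory Set Filter

/-- standard normal density -/
noncomputable def stdPhi (t : ℝ) : ℝ := (Real.sqrt (2 * Real.pi))⁻¹ * Real.exp (-t ^ 2 / 2)

/-- standard normal cumulative distribution function -/
noncomputable def stdCDF (x : ℝ) : ℝ := ∫ t in Set.Iic x, stdPhi t

lemma stdPhi_pos (t : ℝ) : 0 < stdPhi t := by unfold stdPhi; positivity

lemma stdPhi_cont : Continuous stdPhi := by unfold stdPhi; continuity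

lemma stdPhi_integrable : Integrable stdPhi := by
  have h : Integrable (fun t : ℝ => Real.exp (-(1/2) * t ^ 2)) :=
    integrable_exp_neg_mul_sq (by norm_num)
  have := h.const_mul (Real.sqrt (2 * Real.pi))⁻¹
  convert this using 2 with t
  unfold stdPhi; ring_nf

lemma stdPhi_integral : ∫ t, stdPhi t = 1 := by
  unfold stdPhi
  rw [MeasureTheory.integral_const_mul]
  have : (fun t : ℝ => Real.exp (-t ^ 2 / 2)) = fun t : ℝ => Real.exp (-(1/2) * t ^ 2) := by
    ext t; ring_nf
  rw [this, integral_gaussian, show (π / (1/2)) = 2 * π by ring,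
    inv_mul_cancel₀ (by positivity)]

lemma id_mul_stdPhi_integrable : Integrable (fun t : ℝ => t * stdPhi t) := by
  have h : Integrable (fun t : ℝ => t * Real.exp (-(1/2) * t ^ 2)) :=
    integrable_mul_exp_neg_mul_sq (by norm_num)
  have := h.const_mul (Real.sqrt (2 * Real.pi))⁻¹
  convert this using 2 with t
  unfold stdPhi; ring_nf

lemma stdPhi_hasDerivAt (x : ℝ) : HasDerivAt stdPhi (-x * stdPhi x) x := by
  have h : HasDerivAt (fun t : ℝ => -t ^ 2 / 2) (-x) x := by
    exact ((hasDerivAt_pow 2 x).neg.div_const 2).congr_deriv (by push_cast; ring)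
  have := (h.exp).const_mul (Real.sqrt (2 * Real.pi))⁻¹
  exact this.congr_deriv (by unfold stdPhi; ring)

lemma stdPhi_tendsto : Tendsto stdPhi atTop (nhds 0) := by
  have h1 : Tendsto (fun t : ℝ => -t ^ 2 / 2) atTop atBot := by
    apply Tendsto.atBot_div_const (by norm_num)
    exact tendsto_neg_atTop_atBot.comp (tendsto_pow_atTop two_ne_zero)
  have h2 := (Real.tendsto_exp_atBot.comp h1).const_mul (Real.sqrt (2 * Real.pi))⁻¹
  unfold stdPhi
  simpa only [Function.comp_def, mul_zero] using h2

lemma tail_integral (x : ℝ) : ∫ t in Ioi x, t * stdPhi t = stdPhi x := by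
  have h := integral_Ioi_of_hasDerivAt_of_tendsto' (a := x)
    (f := fun t => -stdPhi t) (f' := fun t => t * stdPhi t) (m := 0)
    (fun t _ => by simpa [neg_mul] using (stdPhi_hasDerivAt t).fun_neg)
    (id_mul_stdPhi_integrable.integrableOn)
    (by simpa using stdPhi_tendsto.neg)
  simpa using h

lemma one_sub_cdf (x : ℝ) : 1 - stdCDF x = ∫ t in Ioi x, stdPhi t := by
  have h := MeasureTheory.integral_add_compl (measurableSet_Iic (a := x)) stdPhi_integrable
  rw [compl_Iic] at h
  unfold stdCDF
  rw [← stdPhi_integral]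
  linarith [h]

lemma key_ineq {x : ℝ} (hx : 0 < x) : x * (1 - stdCDF x) < stdPhi x := by
  have hI : IntegrableOn (fun t => (t - x) * stdPhi t) (Ioi x) := by
    have : IntegrableOn (fun t : ℝ => t * stdPhi t - x * stdPhi t) (Ioi x) :=
      id_mul_stdPhi_integrable.integrableOn.sub
        ((stdPhi_integrable.const_mul x).integrableOn)
    exact this.congr_fun (fun t _ => by ring) measurableSet_Ioi
  have hpos : 0 < ∫ t in Ioi x, (t - x) * stdPhi t := by
    rw [setIntegral_pos_iff_support_of_nonneg_ae _ hI]
    · have : Function.support (fun t => (t - x) * stdPhi t) ∩ Ioi x = Ioi x := by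
        apply inter_eq_right.2
        intro t ht
        exact ne_of_gt (mul_pos (by linarith [ht.out]) (stdPhi_pos t))
      rw [this]
      simp
    · rw [EventuallyLE, ae_restrict_iff' measurableSet_Ioi]
      filter_upwards with t ht
      exact le_of_lt (mul_pos (by linarith [ht.out]) (stdPhi_pos t))
  have hsplit : ∫ t in Ioi x, (t - x) * stdPhi t
      = (∫ t in Ioi x, t * stdPhi t) - x * ∫ t in Ioi x, stdPhi t := by
    rw [← MeasureTheory.integral_const_mul, ← MeasureTheory.integral_sub
      id_mul_stdPhi_integrable.integrableOn ((stdPhi_integrable.const_mul x).integrableOn)]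
    congr 1; ext t; ring
  rw [hsplit, tail_integral, ← one_sub_cdf] at hpos
  linarith

lemma stdCDF_hasDerivAt (x : ℝ) : HasDerivAt stdCDF (stdPhi x) x := by
  have heq : ∀ y : ℝ, stdCDF y = stdCDF 0 + ∫ t in (0:ℝ)..y, stdPhi t := by
    intro y
    have := intervalIntegral.integral_Iic_sub_Iic (stdPhi_integrable.integrableOn)
      (stdPhi_integrable.integrableOn) (a := (0:ℝ)) (b := y) (μ := volume)
    unfold stdCDF
    rw [← this]; ring
  have h : HasDerivAt (fun y => stdCDF 0 + ∫ t in (0:ℝ)..y, stdPhi t) (stdPhi x) x :=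
    ((stdPhi_cont.integral_hasStrictDerivAt 0 x).hasDerivAt).const_add (stdCDF 0)
  exact h.congr_of_eventuallyEq (Eventually.of_forall heq)

/-- The reciprocal Mills ratio `x ↦ (1 - Φ(x))/φ(x)` is strictly decreasing on `[0, ∞)`. -/
theorem stmt_10 : StrictAntiOn (fun x => (1 - stdCDF x) / stdPhi x) (Set.Ici (0 : ℝ)) := by
  have hd : ∀ x : ℝ, HasDerivAt (fun x => (1 - stdCDF x) / stdPhi x)
      ((-stdPhi x * stdPhi x - (1 - stdCDF x) * (-x * stdPhi x)) / stdPhi x ^ 2) x := by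
    intro x
    exact HasDerivAt.div (((stdCDF_hasDerivAt x).const_sub 1))
      (stdPhi_hasDerivAt x) (ne_of_gt (stdPhi_pos x))
  apply strictAntiOn_of_deriv_neg (convex_Ici 0)
  · have hc : Continuous stdCDF := by
      rw [continuous_iff_continuousAt]
      exact fun x => (stdCDF_hasDerivAt x).continuousAt
    exact ContinuousOn.div ((continuous_const.sub hc).continuousOn)
      stdPhi_cont.continuousOn (fun x _ => ne_of_gt (stdPhi_pos x))
  · intro x hx
    rw [interior_Ici] at hx
    rw [(hd x).deriv]
    apply div_neg_of_neg_of_pos _ (pow_pos (stdPhi_pos x) 2)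
    have h1 := key_ineq hx
    have h2 : 0 < stdPhi x := stdPhi_pos x
    nlinarith
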